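/- Let q = 2^s, F = 𝔽_{q²}, n = 2q², and let (a₁,b₁),…,(a_n,b_n) be an enumeration of all pairs in F × F with b_k² + b_k = a_k^{q+1}. For a nonnegative integer m let C_m ⊆ F^n be the F-linear span of the vectors ((a_k)^i (b_k)^j)_{k=1,…,n} over all pairs (i,j) of nonnegative integers with j ≤ 1 and 2i + (q+1)j ≤ m. If q − 2 < m < 2q², then the dimension of C_m as an F-vector space equals m − q/2 + 1. -/

import Mathlib

open Polynomial Finset

theorem first_curve_dimension (s : ℕ) (hs : 0 < s) (q : ℕ) (hq : q = 2 ^ s)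
    (F : Type) [Field F] [Fintype F] (hF : Fintype.card F = q ^ 2)
    (n : ℕ) (hn : n = 2 * q ^ 2)
    (pt : Fin n → F × F) (hinj : Function.Injective pt)
    (hrange : ∀ p : F × F, p ∈ Set.range pt ↔ p.2 ^ 2 + p.2 = p.1 ^ (q + 1))
    (C : ℕ → Submodule F (Fin n → F))
    (hC : ∀ m : ℕ, C m = Submodule.span F
      {v : Fin n → F | ∃ i j : ℕ, j ≤ 1 ∧ 2 * i + (q + 1) * j ≤ m ∧
        v = fun k => (pt k).1 ^ i * (pt k).2 ^ j})
    (m : ℕ) (hm1 : q - 2 < m) (hm2 : m < 2 * q ^ 2) :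
    Module.finrank F (C m) = m - q / 2 + 1 := by
  classical
  have hq2 : 2 ≤ q := by
    subst hq; calc 2 = 2 ^ 1 := rfl
    _ ≤ 2 ^ s := Nat.pow_le_pow_right (by norm_num) hs
  have hqdvd : 2 ∣ q := by subst hq; exact dvd_pow_self 2 hs.ne'
  have hQ1 : 1 ≤ q ^ 2 := Nat.one_le_pow _ _ (by omega)
  have hmQ : m / 2 < q ^ 2 := (Nat.div_lt_iff_lt_mul (by norm_num)).mpr (by omega)
  set D : ℕ := m / 2 + 1 with hD
  set E : ℕ := (m + 1 - q) / 2 with hE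
  have hDQ : D ≤ q ^ 2 := by omega
  have hEQ : E ≤ q ^ 2 := by
    have : (m + 1 - q) / 2 ≤ m / 2 := Nat.div_le_div_right (by omega)
    omega
  -- the index set
  set S : Finset (ℕ × ℕ) :=
    ((Finset.range D).image fun i => (i, 0)) ∪ ((Finset.range E).image fun i => (i, 1)) with hSdef
  have hmemS : ∀ i j : ℕ, ((i, j) ∈ S) ↔ (j ≤ 1 ∧ 2 * i + (q + 1) * j ≤ m) := by
    intro i j
    simp only [hSdef, Finset.mem_union, Finset.mem_image, Finset.mem_range, Prod.mk.injEq]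
    constructor
    · rintro (⟨i', hi', rfl, rfl⟩ | ⟨i', hi', rfl, rfl⟩) <;> simp <;> omega
    · rintro ⟨hj, hle⟩
      interval_cases j
      · left; exact ⟨i, by omega, rfl, rfl⟩
      · right; exact ⟨i, by omega, rfl, rfl⟩
  have hdisj : Disjoint ((Finset.range D).image fun i => (i, 0))
      ((Finset.range E).image fun i : ℕ => (i, 1)) := by
    rw [Finset.disjoint_left]
    rintro ⟨a, b⟩ h1 h2
    simp only [Finset.mem_image, Finset.mem_range, Prod.mk.injEq] at h1 h2
    obtain ⟨_, _, _, h0⟩ := h1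
    obtain ⟨_, _, _, h1'⟩ := h2
    omega
  have hinj0 : Function.Injective (fun i : ℕ => (i, 0)) := fun a b h => by
    simpa using h
  have hinj1 : Function.Injective (fun i : ℕ => (i, 1)) := fun a b h => by
    simpa using h
  have hScard : S.card = m - q / 2 + 1 := by
    rw [hSdef, Finset.card_union_of_disjoint hdisj, Finset.card_image_of_injective _ hinj0,
      Finset.card_image_of_injective _ hinj1, Finset.card_range, Finset.card_range]
    omega
  -- the evaluation vectors
  set v : ℕ × ℕ → (Fin n → F) := fun p k => (pt k).1 ^ p.1 * (pt k).2 ^ p.2 with hv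
  have hset : {w : Fin n → F | ∃ i j : ℕ, j ≤ 1 ∧ 2 * i + (q + 1) * j ≤ m ∧
      w = fun k => (pt k).1 ^ i * (pt k).2 ^ j} = Set.range (fun p : ↥S => v ↑p) := by
    ext w
    simp only [Set.mem_setOf_eq, Set.mem_range]
    constructor
    · rintro ⟨i, j, hj, hle, rfl⟩
      exact ⟨⟨(i, j), (hmemS i j).2 ⟨hj, hle⟩⟩, rfl⟩
    · rintro ⟨⟨⟨i, j⟩, hp⟩, rfl⟩
      obtain ⟨hj, hle⟩ := (hmemS i j).1 hp
      exact ⟨i, j, hj, hle, rfl⟩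
  -- every x-fiber of the curve has two distinct points
  have htwo : ∀ a : F, ∃ b1 b2 : F, b1 ≠ b2 ∧ b1 ^ 2 + b1 = a ^ (q + 1) ∧
      b2 ^ 2 + b2 = a ^ (q + 1) := by
    set Sol : Finset (F × F) := Finset.univ.filter (fun p => p.2 ^ 2 + p.2 = p.1 ^ (q + 1))
      with hSol
    have hSolcard : Sol.card = n := by
      have heq : Sol = Finset.image pt Finset.univ := by
        ext p
        simp only [hSol, Finset.mem_filter, Finset.mem_univ, true_and, Finset.mem_image]
        rw [← hrange p]
        simp [Set.mem_range, eq_comm]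
      rw [heq, Finset.card_image_of_injective _ hinj, Finset.card_univ, Fintype.card_fin]
    have hfib : ∀ a : F, (Finset.univ.filter (fun b : F => b ^ 2 + b = a ^ (q + 1))).card ≤ 2 := by
      intro a
      by_cases hne : (Finset.univ.filter (fun b : F => b ^ 2 + b = a ^ (q + 1))).Nonempty
      · obtain ⟨b0, hb0⟩ := hne
        simp only [Finset.mem_filter, Finset.mem_univ, true_and] at hb0
        have hsub : (Finset.univ.filter (fun b : F => b ^ 2 + b = a ^ (q + 1))) ⊆
            ({b0, -b0 - 1} : Finset F) := by
          intro b hb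
          simp only [Finset.mem_filter, Finset.mem_univ, true_and] at hb
          have hfac : (b - b0) * (b + b0 + 1) = 0 := by
            linear_combination hb - hb0
          rcases mul_eq_zero.mp hfac with h | h
          · simp [sub_eq_zero.mp h]
          · have : b = -b0 - 1 := by linear_combination h
            simp [this]
        calc (Finset.univ.filter (fun b : F => b ^ 2 + b = a ^ (q + 1))).card
            ≤ ({b0, -b0 - 1} : Finset F).card := Finset.card_le_card hsub
          _ ≤ 2 := Finset.card_insert_le _ _ |>.trans (by simp)
      · rw [Finset.not_nonempty_iff_eq_empty.mp hne]; simp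
    have hsum : ∑ a : F, (Finset.univ.filter (fun b : F => b ^ 2 + b = a ^ (q + 1))).card = n := by
      rw [← hSolcard, Finset.card_eq_sum_card_fiberwise
        (f := Prod.fst) (t := Finset.univ) (fun x _ => Finset.mem_univ _)]
      apply Finset.sum_congr rfl
      intro a _
      apply Finset.card_nbij' (fun b => (a, b)) (fun p => p.2)
      · intro b hb
        simp only [hSol, Finset.mem_coe, Finset.mem_filter, Finset.mem_univ, true_and, and_true] at hb ⊢
        exact hb
      · intro p hp
        simp only [hSol, Finset.mem_coe, Finset.mem_filter, Finset.mem_univ, true_and] at hp ⊢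
        rw [← hp.2]; exact hp.1
      · intro b _
        rfl
      · intro p hp
        simp only [hSol, Finset.mem_coe, Finset.mem_filter] at hp
        exact Prod.ext hp.2.symm rfl
    have hall : ∀ a : F, (Finset.univ.filter (fun b : F => b ^ 2 + b = a ^ (q + 1))).card = 2 := by
      have h2 : ∑ _a : F, 2 = n := by
        rw [Finset.sum_const, Finset.card_univ, hF, hn, smul_eq_mul]; ring
      have := (Finset.sum_eq_sum_iff_of_le (fun a _ => hfib a)).mp (hsum.trans h2.symm)
      intro a; exact this a (Finset.mem_univ a)
    intro a
    obtain ⟨b1, hb1, b2, hb2, hne⟩ := Finset.one_lt_card.mp (by rw [hall a]; norm_num)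
    simp only [Finset.mem_filter, Finset.mem_univ, true_and] at hb1 hb2
    exact ⟨b1, b2, hne, hb1, hb2⟩
  -- linear independence
  have hli : LinearIndependent F (fun p : ↥S => v ↑p) := by
    rw [Fintype.linearIndependent_iff]
    intro g hg
    set G : ℕ × ℕ → F := fun p => if h : p ∈ S then g ⟨p, h⟩ else 0 with hGdef
    set f0 : F[X] := ∑ i ∈ Finset.range D, Polynomial.monomial i (G (i, 0)) with hf0
    set f1 : F[X] := ∑ i ∈ Finset.range E, Polynomial.monomial i (G (i, 1)) with hf1
    have hev : ∀ k : Fin n, f0.eval (pt k).1 + f1.eval (pt k).1 * (pt k).2 = 0 := by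
      intro k
      have h := congrFun hg k
      simp only [Finset.sum_apply, Pi.smul_apply, smul_eq_mul, Pi.zero_apply] at h
      have hGg : ∀ p : ↥S, g p = G ↑p := by
        intro p; rw [hGdef]; simp [p.2]
      calc f0.eval (pt k).1 + f1.eval (pt k).1 * (pt k).2
          = ∑ i ∈ Finset.range D, G (i, 0) * (pt k).1 ^ i
            + (∑ i ∈ Finset.range E, G (i, 1) * (pt k).1 ^ i) * (pt k).2 := by
            rw [hf0, hf1, Polynomial.eval_finset_sum, Polynomial.eval_finset_sum]
            simp [Polynomial.eval_monomial]
        _ = ∑ i ∈ Finset.range D, G (i, 0) * ((pt k).1 ^ i * (pt k).2 ^ (0 : ℕ))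
            + ∑ i ∈ Finset.range E, G (i, 1) * ((pt k).1 ^ i * (pt k).2 ^ (1 : ℕ)) := by
            rw [Finset.sum_mul]
            congr 1 <;> exact Finset.sum_congr rfl (fun i _ => by ring)
        _ = ∑ p ∈ S, G p * ((pt k).1 ^ p.1 * (pt k).2 ^ p.2) := by
            rw [hSdef, Finset.sum_union hdisj, Finset.sum_image (fun a _ b _ h => hinj0 h),
              Finset.sum_image (fun a _ b _ h => hinj1 h)]
        _ = ∑ p : ↥S, g p * v ↑p k := by
            rw [← Finset.sum_coe_sort S (fun p => G p * ((pt k).1 ^ p.1 * (pt k).2 ^ p.2))]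
            exact Finset.sum_congr rfl (fun p _ => by rw [hGg p, hv])
        _ = 0 := h
    have hev' : ∀ a : F, f1.eval a = 0 ∧ f0.eval a = 0 := by
      intro a
      obtain ⟨b1, b2, hne, hb1, hb2⟩ := htwo a
      obtain ⟨k1, hk1⟩ := Set.mem_range.mp ((hrange (a, b1)).mpr hb1)
      obtain ⟨k2, hk2⟩ := Set.mem_range.mp ((hrange (a, b2)).mpr hb2)
      have e1 := hev k1
      have e2 := hev k2
      rw [hk1] at e1
      rw [hk2] at e2
      simp only at e1 e2
      have h1 : f1.eval a * (b1 - b2) = 0 := by linear_combination e1 - e2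
      have hf1a : f1.eval a = 0 := by
        rcases mul_eq_zero.mp h1 with h | h
        · exact h
        · exact absurd (sub_eq_zero.mp h) hne
      refine ⟨hf1a, ?_⟩
      rw [hf1a] at e1
      simpa using e1
    have hdeg : ∀ (N : ℕ) (c : ℕ → F), N ≤ q ^ 2 →
        (∑ i ∈ Finset.range N, Polynomial.monomial i (c i)).natDegree < Finset.univ.card (α := F) := by
      intro N c hN
      rw [Finset.card_univ, hF]
      have hle : (∑ i ∈ Finset.range N, Polynomial.monomial i (c i)).natDegree ≤ q ^ 2 - 1 := by
        apply Polynomial.natDegree_sum_le_of_forall_le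
        intro i hi
        refine (Polynomial.natDegree_monomial_le (c i)).trans ?_
        simp only [Finset.mem_range] at hi
        omega
      omega
    have hf1z : f1 = 0 := by
      rw [hf1]
      exact Polynomial.eq_zero_of_natDegree_lt_card_of_eval_eq_zero' _ Finset.univ
        (fun a _ => by rw [← hf1]; exact (hev' a).1) (hdeg E _ hEQ)
    have hf0z : f0 = 0 := by
      rw [hf0]
      exact Polynomial.eq_zero_of_natDegree_lt_card_of_eval_eq_zero' _ Finset.univ
        (fun a _ => by rw [← hf0]; exact (hev' a).2) (hdeg D _ hDQ)
    rintro ⟨⟨i, j⟩, hp⟩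
    have hGp : G (i, j) = g ⟨(i, j), hp⟩ := by rw [hGdef]; simp [hp]
    obtain ⟨hj, hle⟩ := (hmemS i j).1 hp
    have hcoeff : ∀ (N : ℕ) (c : ℕ → F) (i0 : ℕ), i0 < N →
        (∑ i ∈ Finset.range N, Polynomial.monomial i (c i)).coeff i0 = c i0 := by
      intro N c i0 hi0
      rw [Polynomial.finset_sum_coeff]
      simp [Polynomial.coeff_monomial, Finset.sum_ite_eq, hi0]
    rw [← hGp]
    interval_cases j
    · have hiD : i < D := by omega
      have := hcoeff D (fun i => G (i, 0)) i hiD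
      rw [← hf0, hf0z] at this
      simpa using this.symm
    · have hiE : i < E := by omega
      have := hcoeff E (fun i => G (i, 1)) i hiE
      rw [← hf1, hf1z] at this
      simpa using this.symm
  rw [hC m, hset, finrank_span_eq_card hli, Fintype.card_coe, hScard]
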